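/- arXiv:1310.0296 — 4 statements merged into one kernel-verified Lean document; each statement's English description precedes it below -/
import Mathlib

section
/- If l1 > 0, l2 > 0 and q2 is not an integer multiple of π, then the Jacobian matrix J = [[-l1·sin(q1) - l2·sin(q1+q2), -l2·sin(q1+q2)], [l1·cos(q1) + l2·cos(q1+q2), l2·cos(q1+q2)]] is invertible. -/
theorem jacobian_invertible (l1 l2 q1 q2 : ℝ) (hl1 : 0 < l1) (hl2 : 0 < l2)
    (hq2 : ∀ n : ℤ, q2 ≠ n * Real.pi) :
    IsUnit (!![-l1 * Real.sin q1 - l2 * Real.sin (q1 + q2), -l2 * Real.sin (q1 + q2);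
               l1 * Real.cos q1 + l2 * Real.cos (q1 + q2), l2 * Real.cos (q1 + q2)] :
        Matrix (Fin 2) (Fin 2) ℝ) := by
  have hs : Real.sin q2 ≠ 0 := by
    intro h
    rcases Real.sin_eq_zero_iff.mp h with ⟨n, hn⟩
    exact hq2 n hn.symm
  rw [Matrix.isUnit_iff_isUnit_det, Matrix.det_fin_two_of]
  have : (-l1 * Real.sin q1 - l2 * Real.sin (q1 + q2)) * (l2 * Real.cos (q1 + q2)) -
      -l2 * Real.sin (q1 + q2) * (l1 * Real.cos q1 + l2 * Real.cos (q1 + q2)) =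
      l1 * l2 * Real.sin q2 := by
    rw [Real.sin_add, Real.cos_add]
    linear_combination l1 * l2 * Real.sin q2 * (Real.sin_sq_add_cos_sq q1)
  rw [this]
  exact (mul_ne_zero (mul_ne_zero hl1.ne' hl2.ne') hs).isUnit
end

section
/- Geometric relation for the two-link mechanism: if q0 := 2π - (q1+q2) + arctan((l1·sin(q1)+l2·sin(q1+q2))/(l1·cos(q1)+l2·cos(q1+q2))), l1, l2 > 0, l1·cos(q1)+l2·cos(q1+q2) > 0, then sin(q0) = -l1·sin(q2)/√(l1² + l2² + 2·l1·l2·cos(q2)). -/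
theorem geometric_relation_sin_q0 (l1 l2 q1 q2 : ℝ) (hl1 : 0 < l1) (hl2 : 0 < l2)
    (hx : 0 < l1 * Real.cos q1 + l2 * Real.cos (q1 + q2))
    (hpos : 0 < l1 ^ 2 + l2 ^ 2 + 2 * l1 * l2 * Real.cos q2) :
    Real.sin (2 * Real.pi - (q1 + q2) +
        Real.arctan ((l1 * Real.sin q1 + l2 * Real.sin (q1 + q2)) /
          (l1 * Real.cos q1 + l2 * Real.cos (q1 + q2))))
      = -l1 * Real.sin q2 / Real.sqrt (l1 ^ 2 + l2 ^ 2 + 2 * l1 * l2 * Real.cos q2) := by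
  set x := l1 * Real.cos q1 + l2 * Real.cos (q1 + q2) with hxdef
  set y := l1 * Real.sin q1 + l2 * Real.sin (q1 + q2) with hydef
  set D := l1 ^ 2 + l2 ^ 2 + 2 * l1 * l2 * Real.cos q2 with hDdef
  have hx' : x ≠ 0 := ne_of_gt hx
  have hc : Real.cos q2 = Real.cos (q1 + q2) * Real.cos q1 + Real.sin (q1 + q2) * Real.sin q1 := by
    rw [show q2 = (q1 + q2) - q1 by ring, Real.cos_sub]; ring_nf
  have hsq : Real.sin q1 ^ 2 + Real.cos q1 ^ 2 = 1 := Real.sin_sq_add_cos_sq q1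
  have hsq2 : Real.sin (q1 + q2) ^ 2 + Real.cos (q1 + q2) ^ 2 = 1 := Real.sin_sq_add_cos_sq (q1 + q2)
  have hD : x ^ 2 + y ^ 2 = D := by
    rw [hxdef, hydef, hDdef, hc]; nlinarith [hsq, hsq2]
  have hDpos : (0:ℝ) < Real.sqrt D := Real.sqrt_pos.mpr hpos
  have harg : 2 * Real.pi - (q1 + q2) + Real.arctan (y / x)
      = (Real.arctan (y / x) - (q1 + q2)) + 2 * Real.pi := by ring
  rw [harg, Real.sin_add_two_pi, Real.sin_sub, Real.sin_arctan, Real.cos_arctan]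
  have h1 : 1 + (y / x) ^ 2 = D / x ^ 2 := by
    field_simp
    linarith [hD]
  have hs : Real.sqrt (1 + (y / x) ^ 2) = Real.sqrt D / x := by
    rw [h1, Real.sqrt_div hpos.le, Real.sqrt_sq hx.le]
  rw [hs]
  have e1 : y / x / (Real.sqrt D / x) = y / Real.sqrt D := by
    field_simp
  have e2 : 1 / (Real.sqrt D / x) = x / Real.sqrt D := by rw [one_div, inv_div]
  rw [e1, e2, div_mul_eq_mul_div, div_mul_eq_mul_div, div_sub_div_same]
  have hsin2 : Real.sin q2 = Real.sin (q1 + q2) * Real.cos q1 - Real.cos (q1 + q2) * Real.sin q1 := by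
    rw [show q2 = (q1 + q2) - q1 by ring, Real.sin_sub]; ring_nf
  have key : y * Real.cos (q1 + q2) - x * Real.sin (q1 + q2) = -l1 * Real.sin q2 := by
    rw [hxdef, hydef, hsin2]; ring
  rw [key]
end

section
/- If the constraints l1·cos(q1)+l2·cos(q1+q2) = l3·cos(q3)+cx and l1·sin(q1)+l2·sin(q1+q2) = l3·sin(q3)+cy hold and q3 - π/2 = q1 + q2, then sin(q3)·(cy·l3 - cx·l2) + cos(q3)·(cx·l3 + cy·l2) = -(l3² + l2² - l1² + cx² + cy²)/2. -/
theorem glut_orthogonality_identity (l1 l2 l3 cx cy q1 q2 q3 : ℝ)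
    (h1 : l1 * Real.cos q1 + l2 * Real.cos (q1 + q2) = l3 * Real.cos q3 + cx)
    (h2 : l1 * Real.sin q1 + l2 * Real.sin (q1 + q2) = l3 * Real.sin q3 + cy)
    (horth : q3 - Real.pi / 2 = q1 + q2) :
    Real.sin q3 * (cy * l3 - cx * l2) + Real.cos q3 * (cx * l3 + cy * l2)
      = -(l3 ^ 2 + l2 ^ 2 - l1 ^ 2 + cx ^ 2 + cy ^ 2) / 2 := by
  have hc : Real.cos (q1 + q2) = Real.sin q3 := by
    rw [← horth, Real.cos_sub]; simp
  have hs : Real.sin (q1 + q2) = -Real.cos q3 := by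
    rw [← horth, Real.sin_sub]; simp
  rw [hc] at h1
  rw [hs] at h2
  have a1 : l1 * Real.cos q1 = l3 * Real.cos q3 + cx - l2 * Real.sin q3 := by linarith
  have a2 : l1 * Real.sin q1 = l3 * Real.sin q3 + cy + l2 * Real.cos q3 := by linarith
  have sq1 : (l1 * Real.cos q1)^2 = (l3 * Real.cos q3 + cx - l2 * Real.sin q3)^2 := by rw [a1]
  have sq2 : (l1 * Real.sin q1)^2 = (l3 * Real.sin q3 + cy + l2 * Real.cos q3)^2 := by rw [a2]
  nlinarith [Real.sin_sq_add_cos_sq q1, Real.sin_sq_add_cos_sq q3, sq1, sq2]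
end

section
/- Integral sign lemma for the RISE structure: let e2 : ℝ → ℝ be continuously differentiable and N_d : ℝ → ℝ continuously differentiable with |N_d(t)| ≤ ζ₀ and |N_d'(t)| ≤ ζ₁ for all t. If β > ζ₀ + ζ₁/α₂ with α₂ > 0, then for all t ≥ 0: ∫₀ᵗ (e2'(s) + α₂·e2(s))·(β·sgn(e2(s)) - N_d(s)) ds ≥ -β·|e2(0)| + e2(0)·N_d(0). -/
open MeasureTheory Set Filter Topology Asymptotics

lemma measurable_realSign : Measurable Real.sign := by
  unfold Real.sign
  exact Measurable.ite (measurableSet_lt measurable_id measurable_const) measurable_const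
    (Measurable.ite (measurableSet_lt measurable_const measurable_id) measurable_const
      measurable_const)

lemma mul_realSign (x : ℝ) : x * Real.sign x = |x| := by
  rcases lt_trichotomy x 0 with h | h | h
  · rw [Real.sign_of_neg h, abs_of_neg h]; ring
  · simp [h]
  · rw [Real.sign_of_pos h, abs_of_pos h]; ring

lemma abs_realSign (x : ℝ) : |Real.sign x| ≤ 1 := by
  rcases Real.sign_apply_eq x with h | h | h <;> simp [h]

lemma countable_bad (f : ℝ → ℝ) (hf : ∀ x, HasDerivAt f (deriv f x) x) :
    Set.Countable {x | f x = 0 ∧ deriv f x ≠ 0} := by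
  set S := {x | f x = 0 ∧ deriv f x ≠ 0} with hS
  haveI : DiscreteTopology S := by
    rw [discreteTopology_subtype_iff]
    intro x hx
    have hev : ∀ᶠ z in 𝓝[≠] x, f z ≠ f x := (hf x).eventually_ne hx.2
    have h1 : ∀ᶠ z in 𝓝[≠] x ⊓ Filter.principal S, f z ≠ f x := hev.filter_mono inf_le_left
    have h2 : ∀ᶠ z in 𝓝[≠] x ⊓ Filter.principal S, z ∈ S :=
      (Filter.eventually_principal.mpr (fun z hz => hz)).filter_mono inf_le_right
    rw [← Filter.eventually_false_iff_eq_bot]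
    filter_upwards [h1, h2] with z h1 h2
    exact h1 (h2.1.trans hx.1.symm)
  haveI : LindelofSpace S := inferInstance
  exact Set.countable_coe_iff.mp countable_of_Lindelof_of_discrete

lemma sign_intervalIntegrable (f : ℝ → ℝ) (hf : ContDiff ℝ 1 f) (t : ℝ) :
    IntervalIntegrable (fun s => deriv f s * Real.sign (f s)) volume 0 t := by
  have hc' : Continuous (deriv f) := hf.continuous_deriv le_rfl
  have hm : Measurable (fun s => deriv f s * Real.sign (f s)) :=
    hc'.measurable.mul (measurable_realSign.comp hf.continuous.measurable)
  refine (hc'.intervalIntegrable 0 t).mono_fun hm.aestronglyMeasurable ?_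
  refine Filter.Eventually.of_forall (fun x => ?_)
  have h1 : |Real.sign (f x)| ≤ 1 := by
    rcases Real.sign_apply_eq (f x) with h | h | h <;> simp [h]
  simp only [Real.norm_eq_abs, abs_mul]
  calc |deriv f x| * |Real.sign (f x)| ≤ |deriv f x| * 1 :=
        mul_le_mul_of_nonneg_left h1 (abs_nonneg _)
    _ = |deriv f x| := mul_one _

lemma integral_deriv_sign (f : ℝ → ℝ) (hf : ContDiff ℝ 1 f) {t : ℝ} (ht : 0 ≤ t) :
    ∫ s in (0:ℝ)..t, deriv f s * Real.sign (f s) = |f t| - |f 0| := by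
  have hd : ∀ x, HasDerivAt f (deriv f x) x := fun x =>
    ((hf.differentiable one_ne_zero) x).hasDerivAt
  have hc : Continuous f := hf.continuous
  have hc' : Continuous (deriv f) := hf.continuous_deriv le_rfl
  set r : ℝ → ℝ := fun x => if f x = 0 then |deriv f x| else deriv f x * Real.sign (f x) with hr
  have hrm : Measurable r := by
    refine Measurable.ite ?_ hc'.measurable.abs
      (hc'.measurable.mul (measurable_realSign.comp hc.measurable))
    exact hc.measurable (measurableSet_singleton 0)
  have hrb : ∀ x, ‖r x‖ ≤ ‖deriv f x‖ := by
    intro x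
    simp only [Real.norm_eq_abs, hr]
    split_ifs with h
    · simp
    · rw [abs_mul]
      have h1 : |Real.sign (f x)| ≤ 1 := by
        rcases Real.sign_apply_eq (f x) with h | h | h <;> simp [h]
      calc |deriv f x| * |Real.sign (f x)| ≤ |deriv f x| * 1 :=
            mul_le_mul_of_nonneg_left h1 (abs_nonneg _)
        _ = |deriv f x| := mul_one _
  have rint : IntervalIntegrable r volume 0 t :=
    (hc'.intervalIntegrable 0 t).mono_fun hrm.aestronglyMeasurable
      (Filter.Eventually.of_forall hrb)
  -- right derivative of |f| is r everywhere
  have hderiv : ∀ x ∈ Ioo 0 t, HasDerivWithinAt (fun z => |f z|) (r x) (Ioi x) x := by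
    intro x _
    by_cases h : f x = 0
    · rw [hr]; simp only [h, if_pos]
      rw [hasDerivWithinAt_iff_isLittleO]
      have base : (fun z => f z - f x - (z - x) • deriv f x) =o[𝓝[>] x] fun z => z - x :=
        ((hasDerivAt_iff_isLittleO.mp (hd x))).mono nhdsWithin_le_nhds
      refine (IsBigO.trans_isLittleO ?_ base)
      rw [isBigO_iff]
      refine ⟨1, ?_⟩
      filter_upwards [self_mem_nhdsWithin] with z hz
      have hzx : x ≤ z := le_of_lt hz
      simp only [Real.norm_eq_abs, smul_eq_mul, h, abs_zero, sub_zero, one_mul]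
      have e2 : |(z - x) * deriv f x| = (z - x) * |deriv f x| := by
        rw [abs_mul, abs_of_nonneg (sub_nonneg.mpr hzx)]
      rw [← e2]
      exact abs_abs_sub_abs_le_abs_sub _ _
    · rcases lt_or_gt_of_ne h with hneg | hpos
      · have hev : ∀ᶠ z in 𝓝 x, f z < 0 := (hc.tendsto x).eventually (eventually_lt_nhds hneg)
        have : HasDerivAt (fun z => |f z|) (-(deriv f x)) x := by
          refine HasDerivAt.congr_of_eventuallyEq (hd x).neg ?_
          filter_upwards [hev] with z hz
          rw [abs_of_neg hz]; rfl
        have hreq : r x = -(deriv f x) := by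
          rw [hr]; simp only [if_neg h, Real.sign_of_neg hneg]; ring
        rw [hreq]; exact this.hasDerivWithinAt
      · have hev : ∀ᶠ z in 𝓝 x, 0 < f z := (hc.tendsto x).eventually (eventually_gt_nhds hpos)
        have : HasDerivAt (fun z => |f z|) (deriv f x) x := by
          refine HasDerivAt.congr_of_eventuallyEq (hd x) ?_
          filter_upwards [hev] with z hz
          rw [abs_of_pos hz]
        have hreq : r x = deriv f x := by
          rw [hr]; simp only [if_neg h, Real.sign_of_pos hpos]; ring
        rw [hreq]; exact this.hasDerivWithinAt
  have hftc : ∫ s in (0:ℝ)..t, r s = |f t| - |f 0| :=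
    intervalIntegral.integral_eq_sub_of_hasDeriv_right_of_le ht
      (hc.abs.continuousOn) hderiv rint
  rw [← hftc]
  apply intervalIntegral.integral_congr_ae
  have hnull : volume {x | f x = 0 ∧ deriv f x ≠ 0} = 0 :=
    (countable_bad f hd).measure_zero _
  have := measure_eq_zero_iff_ae_notMem.mp hnull
  filter_upwards [this] with z hz _
  rw [hr]
  by_cases h : f z = 0
  · have hdz : deriv f z = 0 := by
      by_contra hne
      exact hz ⟨h, hne⟩
    simp [h, hdz]
  · simp [h]

theorem rise_integral_sign (α2 β ζ0 ζ1 : ℝ) (e2 Nd : ℝ → ℝ)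
    (hα2 : 0 < α2) (hζ0 : 0 < ζ0) (hζ1 : 0 < ζ1)
    (he2 : ContDiff ℝ 1 e2) (hNd : ContDiff ℝ 1 Nd)
    (hNdb : ∀ t, |Nd t| ≤ ζ0) (hNd'b : ∀ t, |deriv Nd t| ≤ ζ1)
    (hβ : β > ζ0 + ζ1 / α2) :
    ∀ t, 0 ≤ t →
      ∫ s in (0:ℝ)..t, (deriv e2 s + α2 * e2 s) * (β * Real.sign (e2 s) - Nd s)
        ≥ -β * |e2 0| + e2 0 * Nd 0 := by
  intro t ht
  have hce2 : Continuous e2 := he2.continuous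
  have hce2' : Continuous (deriv e2) := he2.continuous_deriv le_rfl
  have hcNd : Continuous Nd := hNd.continuous
  have hcNd' : Continuous (deriv Nd) := hNd.continuous_deriv le_rfl
  set A : ℝ → ℝ := fun s => deriv e2 s * Real.sign (e2 s) with hA
  set B : ℝ → ℝ := fun s => deriv e2 s * Nd s + e2 s * deriv Nd s with hB
  set C : ℝ → ℝ := fun s => e2 s * deriv Nd s + (α2 * β * |e2 s| - α2 * (e2 s * Nd s)) with hC
  have hAi : IntervalIntegrable A volume 0 t := sign_intervalIntegrable e2 he2 t
  have hBi : IntervalIntegrable B volume 0 t :=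
    ((hce2'.mul hcNd).add (hce2.mul hcNd')).intervalIntegrable 0 t
  have hCi : IntervalIntegrable C volume 0 t :=
    ((hce2.mul hcNd').add ((continuous_const.mul hce2.abs).sub
      (continuous_const.mul (hce2.mul hcNd)))).intervalIntegrable 0 t
  -- rewrite integrand
  have hsplit : ∫ s in (0:ℝ)..t, (deriv e2 s + α2 * e2 s) * (β * Real.sign (e2 s) - Nd s)
      = (∫ s in (0:ℝ)..t, β * A s) - (∫ s in (0:ℝ)..t, B s) + ∫ s in (0:ℝ)..t, C s := by
    rw [← intervalIntegral.integral_sub (hAi.const_mul β) hBi,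
        ← intervalIntegral.integral_add ((hAi.const_mul β).sub hBi) hCi]
    apply intervalIntegral.integral_congr
    intro s _
    have habs : |e2 s| = e2 s * Real.sign (e2 s) := (mul_realSign (e2 s)).symm
    simp only [hA, hB, hC, habs]
    ring
  rw [hsplit, intervalIntegral.integral_const_mul,
    integral_deriv_sign e2 he2 ht]
  have hparts : ∫ s in (0:ℝ)..t, B s = e2 t * Nd t - e2 0 * Nd 0 := by
    apply intervalIntegral.integral_deriv_mul_eq_sub
    · exact fun x _ => ((he2.differentiable one_ne_zero) x).hasDerivAt
    · exact fun x _ => ((hNd.differentiable one_ne_zero) x).hasDerivAt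
    · exact hce2'.intervalIntegrable 0 t
    · exact hcNd'.intervalIntegrable 0 t
  rw [hparts]
  have hkey : α2 * ζ0 + ζ1 ≤ α2 * β := by
    have h1 : ζ0 + ζ1 / α2 < β := hβ
    have h2 : α2 * (ζ0 + ζ1 / α2) ≤ α2 * β := by nlinarith
    have h3 : α2 * (ζ0 + ζ1 / α2) = α2 * ζ0 + ζ1 := by
      field_simp
    linarith
  have hCnonneg : 0 ≤ ∫ s in (0:ℝ)..t, C s := by
    apply intervalIntegral.integral_nonneg ht
    intro s _
    have h1 : e2 s * deriv Nd s ≥ -(|e2 s| * ζ1) := by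
      have := abs_mul (e2 s) (deriv Nd s)
      have h2 : |e2 s * deriv Nd s| ≤ |e2 s| * ζ1 := by
        rw [this]
        exact mul_le_mul_of_nonneg_left (hNd'b s) (abs_nonneg _)
      have := neg_abs_le (e2 s * deriv Nd s)
      linarith
    have h3 : e2 s * Nd s ≤ |e2 s| * ζ0 := by
      have h4 : e2 s * Nd s ≤ |e2 s * Nd s| := le_abs_self _
      rw [abs_mul] at h4
      have := mul_le_mul_of_nonneg_left (hNdb s) (abs_nonneg (e2 s))
      linarith
    have h5 : 0 ≤ |e2 s| := abs_nonneg _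
    simp only [hC]
    nlinarith
  have h6 : e2 t * Nd t ≤ |e2 t| * ζ0 := by
    have h4 : e2 t * Nd t ≤ |e2 t * Nd t| := le_abs_self _
    rw [abs_mul] at h4
    have := mul_le_mul_of_nonneg_left (hNdb t) (abs_nonneg (e2 t))
    linarith
  have h7 : 0 ≤ |e2 t| := abs_nonneg _
  have h8 : ζ0 ≤ β := by
    have : 0 < ζ1 / α2 := div_pos hζ1 hα2
    linarith
  nlinarith
end
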